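/- Let a ≤ b and c ≤ d be positive integers, and in S = k[x,y,z] consider the monomial ideals J_1 = ⟨x^a⟩ + ⟨x^{a−i} z^{b−a+2i−1} : i = 1,...,a⟩ and J_2 = ⟨y^c⟩ + ⟨y^{c−j} z^{d−c+2j−1} : j = 1,...,c⟩. Set N = max{a+d−1, b+c−1}. Then every monomial of S of degree N lies in J_1 + J_2; i.e., (J_1 + J_2)_N = S_N. -/

import Mathlib

open MvPolynomial

/-- The lex-segment ideal `L(a,b) = ⟨u^a, u^{a−1}v^{b−a+1}, …, u^{a−i}v^{b−a+2i−1}, …, v^{a+b−1}⟩`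
in the variables `X u₀` and `X v₀` of `k[x,y,z]`. -/
noncomputable def lexSeg (k : Type) [Field k] (u₀ v₀ : Fin 3) (a b : ℕ) : Ideal (MvPolynomial (Fin 3) k) :=
  Ideal.span ({monomial (Finsupp.single u₀ a) (1 : k)} ∪
    (fun i : ℕ => monomial (Finsupp.single u₀ (a - i) + Finsupp.single v₀ (b - a + 2 * i - 1))
      (1 : k)) '' Set.Icc 1 a)

lemma mem_span_of_le {k : Type} [Field k] {S : Set (MvPolynomial (Fin 3) k)}
    {g m : Fin 3 →₀ ℕ} (hg : monomial g (1 : k) ∈ S) (h : g ≤ m) :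
    monomial m (1 : k) ∈ Ideal.span S := by
  have : monomial m (1 : k) = monomial (m - g) 1 * monomial g 1 := by
    rw [monomial_mul, one_mul, tsub_add_cancel_of_le h]
  rw [this]
  exact Ideal.mul_mem_left _ _ (Ideal.subset_span hg)

lemma lexSeg_def (k : Type) [Field k] (u₀ v₀ : Fin 3) (a b : ℕ) :
    lexSeg k u₀ v₀ a b = Ideal.span ({monomial (Finsupp.single u₀ a) (1 : k)} ∪
    (fun i : ℕ => monomial (Finsupp.single u₀ (a - i) + Finsupp.single v₀ (b - a + 2 * i - 1))
      (1 : k)) '' Set.Icc 1 a) := rfl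

/-- For `J₁ = L(a,b)` in `x,z` and `J₂ = L(c,d)` in `y,z`, every monomial of degree
`N = max{a+d−1, b+c−1}` lies in `J₁ + J₂`; i.e. `(J₁+J₂)_N = S_N`. -/
theorem stmt_13 (k : Type) [Field k] (a b c d : ℕ)
    (ha : 0 < a) (hc : 0 < c) (hab : a ≤ b) (hcd : c ≤ d)
    (N : ℕ) (hN : N = max (a + d - 1) (b + c - 1)) :
    (∀ m : Fin 3 →₀ ℕ, (∑ i, m i) = N →
      monomial m (1 : k) ∈ lexSeg k 0 2 a b ⊔ lexSeg k 1 2 c d) ∧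
    (∀ f : MvPolynomial (Fin 3) k, f.IsHomogeneous N →
      f ∈ lexSeg k 0 2 a b ⊔ lexSeg k 1 2 c d) := by
  have hN1 : a + d - 1 ≤ N := by rw [hN]; exact le_max_left _ _
  have hN2 : b + c - 1 ≤ N := by rw [hN]; exact le_max_right _ _
  have H : ∀ m : Fin 3 →₀ ℕ, (∑ i, m i) = N →
      monomial m (1 : k) ∈ lexSeg k 0 2 a b ⊔ lexSeg k 1 2 c d := by
    intro m hm
    rw [Fin.sum_univ_three] at hm
    by_cases hp : a ≤ m 0
    · apply Ideal.mem_sup_left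
      rw [lexSeg_def]
      apply mem_span_of_le (Or.inl rfl)
      rw [Finsupp.le_def]
      intro s
      fin_cases s <;> simp [Finsupp.single_apply] <;> omega
    by_cases hq : c ≤ m 1
    · apply Ideal.mem_sup_right
      rw [lexSeg_def]
      apply mem_span_of_le (Or.inl rfl)
      rw [Finsupp.le_def]
      intro s
      fin_cases s <;> simp [Finsupp.single_apply] <;> omega
    have hr : (b - a + 2 * (a - m 0) - 1 ≤ m 2) ∨ (d - c + 2 * (c - m 1) - 1 ≤ m 2) := by
      omega
    rcases hr with h | h
    · apply Ideal.mem_sup_left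
      rw [lexSeg_def]
      apply mem_span_of_le (Or.inr ⟨a - m 0, ⟨by omega, by omega⟩, rfl⟩)
      rw [Finsupp.le_def]
      intro s
      fin_cases s <;> simp [Finsupp.single_apply] <;> omega
    · apply Ideal.mem_sup_right
      rw [lexSeg_def]
      apply mem_span_of_le (Or.inr ⟨c - m 1, ⟨by omega, by omega⟩, rfl⟩)
      rw [Finsupp.le_def]
      intro s
      fin_cases s <;> simp [Finsupp.single_apply] <;> omega
  refine ⟨H, fun f hf => ?_⟩
  rw [f.as_sum]
  apply Ideal.sum_mem
  intro m hmsup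
  have hc0 : coeff m f ≠ 0 := mem_support_iff.1 hmsup
  have hdeg : (Finsupp.weight 1) m = N := hf hc0
  have hdeg' : ∑ i, m i = N := by
    rw [← hdeg, Finsupp.weight_apply, Finsupp.sum]
    simp only [smul_eq_mul, Pi.one_apply, mul_one]
    exact (Finset.sum_subset (Finset.subset_univ _)
      (fun i _ hi => Finsupp.notMem_support_iff.1 hi)).symm
  have : (monomial m) (coeff m f) = C (coeff m f) * monomial m (1 : k) := by
    rw [C_mul_monomial, mul_one]
  rw [this]
  exact Ideal.mul_mem_left _ _ (H m hdeg')
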